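/- For every k > 0 and every y ≥ 0, the Poisson log-exp reparameterized data-fit ψ_{k,y} is differentiable on all of ℝ and there exists a constant L ≥ 0 such that the derivative of ψ_{k,y} is Lipschitz continuous on ℝ with constant L. -/

import Mathlib

open Real

private lemma logexp_pos (θ : ℝ) : 0 < Real.log (1 + Real.exp θ) := by
  apply Real.log_pos
  linarith [Real.exp_pos θ]

private lemma one_add_exp_pos (θ : ℝ) : 0 < 1 + Real.exp θ := by
  linarith [Real.exp_pos θ]

private lemma log_le (θ : ℝ) : Real.log (1 + Real.exp θ) ≤ Real.exp θ := by
  have := Real.log_le_sub_one_of_pos (one_add_exp_pos θ)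
  linarith

private lemma log_ge (θ : ℝ) :
    Real.exp θ ≤ (1 + Real.exp θ) * Real.log (1 + Real.exp θ) := by
  have h1 : (0:ℝ) < (1 + Real.exp θ)⁻¹ := by positivity
  have h2 := Real.log_le_sub_one_of_pos h1
  rw [Real.log_inv] at h2
  have h3 : (1 + Real.exp θ)⁻¹ - 1 = -(Real.exp θ / (1 + Real.exp θ)) := by
    field_simp
    ring
  rw [h3] at h2
  have h4 : Real.exp θ / (1 + Real.exp θ) ≤ Real.log (1 + Real.exp θ) := by linarith
  calc Real.exp θ = (1 + Real.exp θ) * (Real.exp θ / (1 + Real.exp θ)) := by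
        field_simp
    _ ≤ (1 + Real.exp θ) * Real.log (1 + Real.exp θ) := by
        exact mul_le_mul_of_nonneg_left h4 (le_of_lt (one_add_exp_pos θ))

private lemma psi_hasDerivAt (k : ℝ) (hk : 0 < k) (y : ℝ) (θ : ℝ) :
    HasDerivAt (fun θ : ℝ => k * Real.log (1 + Real.exp θ)
      - y * Real.log (k * Real.log (1 + Real.exp θ)))
      (k * (Real.exp θ / (1 + Real.exp θ))
        - y * (Real.exp θ / (1 + Real.exp θ) / Real.log (1 + Real.exp θ))) θ := by
  have hpos := one_add_exp_pos θ
  have hL := logexp_pos θ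
  have h1 : HasDerivAt (fun θ : ℝ => 1 + Real.exp θ) (Real.exp θ) θ :=
    (Real.hasDerivAt_exp θ).const_add 1
  have h2 : HasDerivAt (fun θ : ℝ => Real.log (1 + Real.exp θ))
      (Real.exp θ / (1 + Real.exp θ)) θ := h1.log (ne_of_gt hpos)
  have h3 : HasDerivAt (fun θ : ℝ => k * Real.log (1 + Real.exp θ))
      (k * (Real.exp θ / (1 + Real.exp θ))) θ := h2.const_mul k
  have hkL : k * Real.log (1 + Real.exp θ) ≠ 0 := by positivity
  have h4 : HasDerivAt (fun θ : ℝ => Real.log (k * Real.log (1 + Real.exp θ)))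
      (k * (Real.exp θ / (1 + Real.exp θ)) / (k * Real.log (1 + Real.exp θ))) θ :=
    h3.log hkL
  have h5 := h3.sub ((h4.const_mul y))
  rw [mul_div_mul_left _ _ (ne_of_gt hk)] at h5
  exact h5

private lemma psi_deriv (k : ℝ) (hk : 0 < k) (y : ℝ) (θ : ℝ) :
    deriv (fun θ : ℝ => k * Real.log (1 + Real.exp θ)
      - y * Real.log (k * Real.log (1 + Real.exp θ))) θ
    = k * (Real.exp θ / (1 + Real.exp θ))
        - y * (Real.exp θ / (1 + Real.exp θ) / Real.log (1 + Real.exp θ)) :=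
  (psi_hasDerivAt k hk y θ).deriv

private lemma g_hasDerivAt (k y : ℝ) (θ : ℝ) :
    HasDerivAt (fun θ : ℝ => k * (Real.exp θ / (1 + Real.exp θ))
        - y * (Real.exp θ / (1 + Real.exp θ) / Real.log (1 + Real.exp θ)))
      (k * ((Real.exp θ * (1 + Real.exp θ) - Real.exp θ * Real.exp θ) / (1 + Real.exp θ) ^ 2)
        - y * (((Real.exp θ * (1 + Real.exp θ) - Real.exp θ * Real.exp θ) / (1 + Real.exp θ) ^ 2
            * Real.log (1 + Real.exp θ)
            - Real.exp θ / (1 + Real.exp θ) * (Real.exp θ / (1 + Real.exp θ)))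
          / Real.log (1 + Real.exp θ) ^ 2)) θ := by
  have hpos := one_add_exp_pos θ
  have hL := logexp_pos θ
  have h1 : HasDerivAt (fun θ : ℝ => 1 + Real.exp θ) (Real.exp θ) θ :=
    (Real.hasDerivAt_exp θ).const_add 1
  have hσ : HasDerivAt (fun θ : ℝ => Real.exp θ / (1 + Real.exp θ))
      ((Real.exp θ * (1 + Real.exp θ) - Real.exp θ * Real.exp θ) / (1 + Real.exp θ) ^ 2) θ :=
    (Real.hasDerivAt_exp θ).div h1 (ne_of_gt hpos)
  have hLd : HasDerivAt (fun θ : ℝ => Real.log (1 + Real.exp θ))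
      (Real.exp θ / (1 + Real.exp θ)) θ := h1.log (ne_of_gt hpos)
  have hh : HasDerivAt (fun θ : ℝ => Real.exp θ / (1 + Real.exp θ) / Real.log (1 + Real.exp θ))
      (((Real.exp θ * (1 + Real.exp θ) - Real.exp θ * Real.exp θ) / (1 + Real.exp θ) ^ 2
          * Real.log (1 + Real.exp θ)
          - Real.exp θ / (1 + Real.exp θ) * (Real.exp θ / (1 + Real.exp θ)))
        / Real.log (1 + Real.exp θ) ^ 2) θ := hσ.div hLd (ne_of_gt hL)
  exact (hσ.const_mul k).sub (hh.const_mul y)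

private lemma g_deriv_bound (k : ℝ) (hk : 0 < k) (y : ℝ) (hy : 0 ≤ y) (θ : ℝ) :
    |k * ((Real.exp θ * (1 + Real.exp θ) - Real.exp θ * Real.exp θ) / (1 + Real.exp θ) ^ 2)
        - y * (((Real.exp θ * (1 + Real.exp θ) - Real.exp θ * Real.exp θ) / (1 + Real.exp θ) ^ 2
            * Real.log (1 + Real.exp θ)
            - Real.exp θ / (1 + Real.exp θ) * (Real.exp θ / (1 + Real.exp θ)))
          / Real.log (1 + Real.exp θ) ^ 2)| ≤ k / 4 + y := by
  set t := Real.exp θ with ht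
  have htpos : 0 < t := Real.exp_pos θ
  set L := Real.log (1 + Real.exp θ) with hLdef
  have hLpos : 0 < L := logexp_pos θ
  have hle : L ≤ t := log_le θ
  have hge : t ≤ (1 + t) * L := log_ge θ
  have hA : (t * (1 + t) - t * t) / (1 + t) ^ 2 = t / (1 + t) ^ 2 := by ring
  rw [hA]
  -- bound first term magnitude
  have hA1 : |t / (1 + t) ^ 2| ≤ 1 / 4 := by
    rw [abs_of_nonneg (by positivity)]
    rw [div_le_div_iff₀ (by positivity) (by norm_num)]
    nlinarith [sq_nonneg (1 - t)]
  -- bound second term magnitude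
  have hB1 : |(t / (1 + t) ^ 2 * L - t / (1 + t) * (t / (1 + t))) / L ^ 2| ≤ 1 := by
    rw [abs_div, div_le_one (by positivity)]
    rw [abs_of_nonneg (by positivity : (0:ℝ) ≤ L ^ 2)]
    have hnum : t / (1 + t) ^ 2 * L - t / (1 + t) * (t / (1 + t)) = t * (L - t) / (1 + t) ^ 2 := by
      field_simp
    rw [hnum, abs_div, abs_of_nonneg (by positivity : (0:ℝ) ≤ (1 + t) ^ 2)]
    rw [div_le_iff₀ (by positivity)]
    rw [abs_of_nonpos (by nlinarith : t * (L - t) ≤ 0)]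
    nlinarith [sq_nonneg ((1 + t) * L - t), mul_pos hLpos htpos]
  have h1 : |k * (t / (1 + t) ^ 2)| ≤ k / 4 := by
    rw [abs_mul, abs_of_pos hk]
    calc k * |t / (1 + t) ^ 2| ≤ k * (1 / 4) := mul_le_mul_of_nonneg_left hA1 hk.le
      _ = k / 4 := by ring
  have h2 : |y * ((t / (1 + t) ^ 2 * L - t / (1 + t) * (t / (1 + t))) / L ^ 2)| ≤ y := by
    rw [abs_mul, abs_of_nonneg hy]
    calc y * |(t / (1 + t) ^ 2 * L - t / (1 + t) * (t / (1 + t))) / L ^ 2| ≤ y * 1 :=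
        mul_le_mul_of_nonneg_left hB1 hy
      _ = y := by ring
  calc |k * (t / (1 + t) ^ 2)
        - y * ((t / (1 + t) ^ 2 * L - t / (1 + t) * (t / (1 + t))) / L ^ 2)|
      = |k * (t / (1 + t) ^ 2)
        + -(y * ((t / (1 + t) ^ 2 * L - t / (1 + t) * (t / (1 + t))) / L ^ 2))| := by
        rw [sub_eq_add_neg]
    _ ≤ |k * (t / (1 + t) ^ 2)|
        + |-(y * ((t / (1 + t) ^ 2 * L - t / (1 + t) * (t / (1 + t))) / L ^ 2))| := abs_add_le _ _
    _ = |k * (t / (1 + t) ^ 2)|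
        + |y * ((t / (1 + t) ^ 2 * L - t / (1 + t) * (t / (1 + t))) / L ^ 2)| := by rw [abs_neg]
    _ ≤ k / 4 + y := add_le_add h1 h2

/-- **Poisson log-exp reparameterized data-fit is smooth with Lipschitz gradient.**
For every k > 0 and every y ≥ 0, ψ_{k,y} is differentiable on all of ℝ and
its derivative is Lipschitz continuous on ℝ with some constant L ≥ 0. -/
theorem poisson_logexp_datafit_smooth
    (k : ℝ) (hk : 0 < k) (y : ℝ) (hy : 0 ≤ y) :
    Differentiable ℝ (fun θ : ℝ =>
      k * Real.log (1 + Real.exp θ)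
        - y * Real.log (k * Real.log (1 + Real.exp θ))) ∧
    ∃ L : ℝ, 0 ≤ L ∧ ∀ a b : ℝ,
      |deriv (fun θ : ℝ =>
        k * Real.log (1 + Real.exp θ)
          - y * Real.log (k * Real.log (1 + Real.exp θ))) a
       - deriv (fun θ : ℝ =>
        k * Real.log (1 + Real.exp θ)
          - y * Real.log (k * Real.log (1 + Real.exp θ))) b| ≤ L * |a - b| := by
  constructor
  · intro θ
    exact (psi_hasDerivAt k hk y θ).differentiableAt
  · refine ⟨k / 4 + y, by positivity, fun a b => ?_⟩
    set g : ℝ → ℝ := fun θ => k * (Real.exp θ / (1 + Real.exp θ))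
        - y * (Real.exp θ / (1 + Real.exp θ) / Real.log (1 + Real.exp θ)) with hg
    have key : ∀ a b : ℝ, |g a - g b| ≤ (k / 4 + y) * |a - b| := by
      intro a b
      have := Convex.norm_image_sub_le_of_norm_deriv_le
        (f := g) (s := Set.univ) (C := k / 4 + y)
        (fun x _ => (g_hasDerivAt k y x).differentiableAt)
        (fun x _ => by
          rw [(g_hasDerivAt k y x).deriv]
          exact g_deriv_bound k hk y hy x)
        convex_univ (Set.mem_univ b) (Set.mem_univ a)
      simpa [Real.norm_eq_abs] using this
    rw [psi_deriv k hk y a, psi_deriv k hk y b]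
    exact key a b
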